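/- Let K and L be fields with algebraic closure L̄ of L, and q : K → L a multiplicative quadratic map. Then there exist field monomorphisms φ₁, φ₂ : K → L̄ such that q(a) = φ₁(a)·φ₂(a) for all a ∈ K. -/

import Mathlib

/-- The polar (biadditive) form associated to a map `q`. -/
def polarMap {K L : Type*} [NonAssocRing K] [NonAssocRing L] (q : K → L) (a b : K) : L :=
  q (a + b) - q a - q b

section AuxPM

variable {K L : Type*} [Field K] [Field L] (q : K → L)

theorem pm_q1 (hint : ∀ n : ℤ, q ((n : K)) = ((n ^ 2 : ℤ) : L)) : q 1 = 1 := by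
  have := hint 1; push_cast at this; simpa using this

theorem pm_q0 (hint : ∀ n : ℤ, q ((n : K)) = ((n ^ 2 : ℤ) : L)) : q 0 = 0 := by
  have := hint 0; push_cast at this; simpa using this

theorem pm_q2 (hint : ∀ n : ℤ, q ((n : K)) = ((n ^ 2 : ℤ) : L)) : q 2 = 4 := by
  have := hint 2; push_cast at this; simpa using this

theorem pm_symm (a b : K) : polarMap q a b = polarMap q b a := by
  unfold polarMap; rw [add_comm]; ring

theorem pm_scale (hmul : ∀ a b : K, q (a * b) = q a * q b) (a b c : K) :
    polarMap q (a * c) (b * c) = polarMap q a b * q c := by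
  unfold polarMap
  rw [← add_mul, hmul, hmul, hmul]; ring

theorem pm_qadd (a b : K) : q (a + b) = polarMap q a b + q a + q b := by
  unfold polarMap; ring

theorem pm_star (hmul : ∀ a b : K, q (a * b) = q a * q b)
    (hbil_left : ∀ a b c : K, polarMap q (a + b) c = polarMap q a c + polarMap q b c)
    (hbil_right : ∀ a b c : K, polarMap q a (b + c) = polarMap q a b + polarMap q a c)
    (a b c d : K) :
    polarMap q (a * c) (b * d) + polarMap q (a * d) (b * c)
      = polarMap q a b * polarMap q c d := by
  have h := pm_scale q hmul a b (c + d)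
  rw [mul_add, mul_add, hbil_left, hbil_right, hbil_right, pm_qadd q c d] at h
  rw [pm_scale q hmul a b c, pm_scale q hmul a b d] at h
  linear_combination h

theorem pm_tstar (hmul : ∀ a b : K, q (a * b) = q a * q b)
    (hbil_left : ∀ a b c : K, polarMap q (a + b) c = polarMap q a c + polarMap q b c)
    (hbil_right : ∀ a b c : K, polarMap q a (b + c) = polarMap q a b + polarMap q a c)
    (a b : K) :
    polarMap q (a * b) 1 + polarMap q a b = polarMap q a 1 * polarMap q b 1 := by
  have h := pm_star q hmul hbil_left hbil_right a 1 b 1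
  simpa using h

theorem pm_t1 (hint : ∀ n : ℤ, q ((n : K)) = ((n ^ 2 : ℤ) : L)) :
    polarMap q 1 1 = 2 := by
  unfold polarMap
  rw [one_add_one_eq_two, pm_q2 q hint, pm_q1 q hint]; norm_num

theorem pm_faa (hmul : ∀ a b : K, q (a * b) = q a * q b)
    (hint : ∀ n : ℤ, q ((n : K)) = ((n ^ 2 : ℤ) : L)) (a : K) :
    polarMap q a a = 2 * q a := by
  unfold polarMap
  have h : a + a = 2 * a := by ring
  rw [h, hmul, pm_q2 q hint]; ring

theorem pm_tadd (hbil_left : ∀ a b c : K, polarMap q (a + b) c = polarMap q a c + polarMap q b c)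
    (a b : K) : polarMap q (a + b) 1 = polarMap q a 1 + polarMap q b 1 :=
  hbil_left a b 1

theorem pm_fzero_left
    (hbil_left : ∀ a b c : K, polarMap q (a + b) c = polarMap q a c + polarMap q b c)
    (b : K) : polarMap q 0 b = 0 := by
  have h := hbil_left 0 0 b
  rw [add_zero] at h
  linear_combination -h

end AuxPM

/-- The auxiliary symmetric form `c(a,b) = t(a)t(b) - 2 f(a,b)`. -/
def cPM {K L : Type*} [Field K] [Field L] (q : K → L) (a b : K) : L :=
  polarMap q a 1 * polarMap q b 1 - 2 * polarMap q a b

section AuxC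

variable {K L : Type*} [Field K] [Field L] (q : K → L)
  (hmul : ∀ a b : K, q (a * b) = q a * q b)
  (hint : ∀ n : ℤ, q ((n : K)) = ((n ^ 2 : ℤ) : L))
  (hbil_left : ∀ a b c : K, polarMap q (a + b) c = polarMap q a c + polarMap q b c)
  (hbil_right : ∀ a b c : K, polarMap q a (b + c) = polarMap q a b + polarMap q a c)

include hmul hbil_left hbil_right

theorem pm_crank (a b x y : K) :
    cPM q a x * cPM q b y = cPM q a b * cPM q x y := by
  have S1 := pm_star q hmul hbil_left hbil_right x y (a*b) 1
  have S2 := pm_star q hmul hbil_left hbil_right a b (x*y) 1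
  have S3 := pm_star q hmul hbil_left hbil_right b y (a*x) 1
  have S4 := pm_star q hmul hbil_left hbil_right a x (b*y) 1
  have U1 := pm_tstar q hmul hbil_left hbil_right a b
  have U2 := pm_tstar q hmul hbil_left hbil_right x y
  have U3 := pm_tstar q hmul hbil_left hbil_right a x
  have U4 := pm_tstar q hmul hbil_left hbil_right b y
  have sy1 := pm_symm q x (a*b*y)
  have sy2 := pm_symm q (a*x*y) b
  unfold cPM
  linear_combination (norm := ring_nf)
    (-2*polarMap q x y)*U1 - 2*polarMap q a b*U2 + 2*polarMap q b y*U3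
    + 2*polarMap q a x*U4 - 2*(S1 + S2 - S3 - S4) + 2*sy1 + 2*sy2

theorem pm_cross (a b o : K) :
    polarMap q a 1 * cPM q b o + polarMap q b 1 * cPM q a o = 2 * cPM q (a*b) o := by
  have A1 := pm_star q hmul hbil_left hbil_right a o b 1
  have A2 := pm_star q hmul hbil_left hbil_right b o a 1
  have A3 := pm_star q hmul hbil_left hbil_right a b o 1
  have U := pm_tstar q hmul hbil_left hbil_right a b
  have sy1 := pm_symm q (a*o) b
  unfold cPM
  linear_combination (norm := ring_nf)
    2*A1 + 2*A2 - 2*A3 - 2*(polarMap q o 1)*U + 2*sy1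

theorem pm_c2 (a b : K) :
    cPM q a b = 2 * polarMap q (a*b) 1 - polarMap q a 1 * polarMap q b 1 := by
  have U := pm_tstar q hmul hbil_left hbil_right a b
  unfold cPM
  linear_combination -2*U

omit hmul hbil_right in
theorem pm_cadd_left (a b o : K) :
    cPM q (a + b) o = cPM q a o + cPM q b o := by
  unfold cPM
  rw [pm_tadd q hbil_left, hbil_left]; ring

include hint in
omit hmul hbil_right in
theorem pm_c1 (o : K) : cPM q 1 o = 0 := by
  unfold cPM
  rw [pm_t1 q hint, pm_symm q 1 o]; ring

include hint in
theorem pm_caa (a : K) : cPM q a a = polarMap q a 1 ^ 2 - 4 * q a := by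
  unfold cPM
  rw [pm_faa q hmul hint]; ring

end AuxC

section AuxChar2

variable {K L : Type*} [Field K] [Field L] (q : K → L)
  (hmul : ∀ a b : K, q (a * b) = q a * q b)
  (hbil_left : ∀ a b c : K, polarMap q (a + b) c = polarMap q a c + polarMap q b c)
  (hbil_right : ∀ a b c : K, polarMap q a (b + c) = polarMap q a b + polarMap q a c)
  (h2 : (2 : L) = 0)

include hmul hbil_left hbil_right h2

/-- char 2: `f(a,o)t(b) + f(b,o)t(a) + t(a)t(b)t(o) = t(o)t(ab)` -/
theorem pm_II0 (a b o : K) :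
    polarMap q a o * polarMap q b 1 + polarMap q b o * polarMap q a 1
      + polarMap q a 1 * polarMap q b 1 * polarMap q o 1
      = polarMap q o 1 * polarMap q (a*b) 1 := by
  have A1 := pm_star q hmul hbil_left hbil_right a o b 1
  have A2 := pm_star q hmul hbil_left hbil_right b o a 1
  have A3 := pm_star q hmul hbil_left hbil_right a b o 1
  have U := pm_tstar q hmul hbil_left hbil_right a b
  have sy1 := pm_symm q (a*o) b
  linear_combination (norm := ring_nf)
    -A1 - A2 - A3 - (polarMap q o 1)*U - sy1
    + (polarMap q (a*b) o + polarMap q a (b*o) + polarMap q (a*o) b)*h2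

/-- char 2: `f(a,o)f(b,o) = t(a)t(b)q(o) + t(o)f(ab,o)` -/
theorem pm_I0 (a b o : K) :
    polarMap q a o * polarMap q b o
      = polarMap q a 1 * polarMap q b 1 * q o + polarMap q o 1 * polarMap q (a*b) o := by
  have B1 := pm_star q hmul hbil_left hbil_right a o b o
  have B2 := pm_scale q hmul a b o
  have B3 := pm_star q hmul hbil_left hbil_right (a*b) o o 1
  have B4 := pm_scale q hmul (a*b) 1 o
  have U := pm_tstar q hmul hbil_left hbil_right a b
  linear_combination (norm := ring_nf)
    -B1 + B2 + B3 - B4 + (q o)*U - (q o * polarMap q (a*b) 1)*h2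

/-- char 2: `f(a,o)^2 + t(o)t(a)f(a,o) = t(a)^2 q(o) + t(o)^2 q(a)` -/
theorem pm_P0 (a o : K) :
    polarMap q a o ^ 2 + polarMap q o 1 * polarMap q a 1 * polarMap q a o
      = polarMap q a 1 ^ 2 * q o + polarMap q o 1 ^ 2 * q a := by
  have B1 := pm_star q hmul hbil_left hbil_right a o a o
  have B2 := pm_scale q hmul a a o
  have B3 := pm_star q hmul hbil_left hbil_right (a*a) o o 1
  have B4 := pm_scale q hmul (a*a) 1 o
  have U := pm_tstar q hmul hbil_left hbil_right a a
  have C1 := pm_star q hmul hbil_left hbil_right a 1 a o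
  have C2 := pm_scale q hmul o 1 a
  linear_combination (norm := ring_nf)
    -B1 + B2 + B3 - B4 + (q o)*U + (polarMap q o 1)*C1 - (polarMap q o 1)*C2
    + (- q o * polarMap q (a*a) 1 + polarMap q o 1 * polarMap q a 1 * polarMap q a o
       - polarMap q o 1 ^ 2 * q a)*h2

end AuxChar2

section Cases

variable {K L : Type*} [Field K] [Field L] (q : K → L)
  (hmul : ∀ a b : K, q (a * b) = q a * q b)
  (hint : ∀ n : ℤ, q ((n : K)) = ((n ^ 2 : ℤ) : L))
  (hbil_left : ∀ a b c : K, polarMap q (a + b) c = polarMap q a c + polarMap q b c)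
  (hbil_right : ∀ a b c : K, polarMap q a (b + c) = polarMap q a b + polarMap q a c)

include hmul hint hbil_left hbil_right

theorem pm_case1 (h2 : (2 : L) = 0) (ht : ∀ a : K, polarMap q a 1 = 0) :
    ∃ φ₁ φ₂ : K →+* AlgebraicClosure L,
      ∀ a : K, algebraMap L (AlgebraicClosure L) (q a) = φ₁ a * φ₂ a := by
  set ι := algebraMap L (AlgebraicClosure L) with hι
  have h2' : (2 : AlgebraicClosure L) = 0 := by
    rw [← map_ofNat ι 2, show ((2:L) = 0) from h2, map_zero]
  have hf : ∀ a b : K, polarMap q a b = 0 := by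
    intro a b
    have U := pm_tstar q hmul hbil_left hbil_right a b
    rw [ht (a*b), ht a, ht b] at U
    linear_combination U
  have hq : ∀ a b : K, q (a + b) = q a + q b := by
    intro a b; rw [pm_qadd q a b, hf]; ring
  have hqsq : ∀ a : K, ∃ z : AlgebraicClosure L, z ^ 2 = ι (q a) := fun a =>
    IsAlgClosed.exists_pow_nat_eq _ (by norm_num)
  choose r hr using hqsq
  have hinj : ∀ x y : AlgebraicClosure L, x ^ 2 = y ^ 2 → x = y := by
    intro x y h
    have h0 : (x - y) ^ 2 = 0 := by linear_combination h + (y ^ 2 - x * y) * h2'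
    exact sub_eq_zero.mp (pow_eq_zero_iff (two_ne_zero) |>.mp h0)
  have hone : r 1 = 1 := hinj _ _ (by rw [hr, pm_q1 q hint, map_one, one_pow])
  have hmul' : ∀ a b : K, r (a * b) = r a * r b := fun a b =>
    hinj _ _ (by rw [hr, hmul, map_mul, mul_pow, hr, hr])
  have hadd' : ∀ a b : K, r (a + b) = r a + r b := by
    intro a b
    refine hinj _ _ ?_
    rw [hr, hq, map_add, ← hr a, ← hr b]
    linear_combination (-(r a * r b)) * h2'
  let φ : K →+* AlgebraicClosure L := RingHom.mk' (MonoidHom.mk (OneHom.mk r hone) hmul') hadd'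
  refine ⟨φ, φ, fun a => ?_⟩
  show ι (q a) = r a * r a
  rw [← hr a]; ring

theorem pm_case3 (h2 : (2 : L) ≠ 0) (hD : ∀ a : K, cPM q a a = 0) :
    ∃ φ₁ φ₂ : K →+* AlgebraicClosure L,
      ∀ a : K, algebraMap L (AlgebraicClosure L) (q a) = φ₁ a * φ₂ a := by
  set ι := algebraMap L (AlgebraicClosure L) with hι
  have hc : ∀ a b : K, cPM q a b = 0 := by
    intro a b
    have h := pm_crank q hmul hbil_left hbil_right a a b b
    rw [hD a, hD b, zero_mul] at h
    exact mul_self_eq_zero.mp h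
  have hone : polarMap q 1 1 / 2 = (1 : L) := by
    rw [pm_t1 q hint]
    field_simp
  have hmul' : ∀ a b : K, polarMap q (a*b) 1 / 2 = (polarMap q a 1 / 2) * (polarMap q b 1 / 2) := by
    intro a b
    have key : 2 * polarMap q (a*b) 1 = polarMap q a 1 * polarMap q b 1 := by
      linear_combination (pm_c2 q hmul hbil_left hbil_right a b).symm + hc a b
    field_simp
    linear_combination key
  have hadd' : ∀ a b : K, polarMap q (a+b) 1 / 2 = polarMap q a 1 / 2 + polarMap q b 1 / 2 := by
    intro a b; rw [pm_tadd q hbil_left, add_div]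
  let φK : K →+* L := RingHom.mk'
    (MonoidHom.mk (OneHom.mk (fun a => polarMap q a 1 / 2) hone) hmul') hadd'
  let φ : K →+* AlgebraicClosure L := ι.comp φK
  refine ⟨φ, φ, fun a => ?_⟩
  have hqa : q a = (polarMap q a 1 / 2) * (polarMap q a 1 / 2) := by
    have h := pm_caa q hmul hint hbil_left hbil_right a
    rw [hD a] at h
    field_simp
    linear_combination h
  show ι (q a) = ι (φK a) * ι (φK a)
  rw [← map_mul]
  exact congrArg ι hqa

theorem pm_case4 (h2 : (2 : L) ≠ 0) (o : K) (hd : cPM q o o ≠ 0) :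
    ∃ φ₁ φ₂ : K →+* AlgebraicClosure L,
      ∀ a : K, algebraMap L (AlgebraicClosure L) (q a) = φ₁ a * φ₂ a := by
  set ι := algebraMap L (AlgebraicClosure L) with hι
  have hd' : ι (cPM q o o) ≠ 0 := fun h => hd (by apply ι.injective; rw [h, map_zero])
  have h2' : (2 : AlgebraicClosure L) ≠ 0 := by
    rw [← map_ofNat ι 2]
    exact fun h => h2 (by apply ι.injective; rw [h, map_zero])
  obtain ⟨s, hs⟩ := IsAlgClosed.exists_pow_nat_eq (ι (cPM q o o)) (n := 2) (by norm_num)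
  -- mapped identities
  have r1 : ∀ a b : K, ι (cPM q a o) * ι (cPM q b o) = ι (cPM q a b) * ι (cPM q o o) := by
    intro a b
    have h := congrArg ι (pm_crank q hmul hbil_left hbil_right a b o o)
    simpa only [map_mul] using h
  have r2 : ∀ a b : K, ι (polarMap q a 1) * ι (cPM q b o) + ι (polarMap q b 1) * ι (cPM q a o)
      = 2 * ι (cPM q (a*b) o) := by
    intro a b
    have h := congrArg ι (pm_cross q hmul hbil_left hbil_right a b o)
    simpa only [map_mul, map_add, map_ofNat] using h
  have r3 : ∀ a b : K, ι (cPM q a b)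
      = 2 * ι (polarMap q (a*b) 1) - ι (polarMap q a 1) * ι (polarMap q b 1) := by
    intro a b
    have h := congrArg ι (pm_c2 q hmul hbil_left hbil_right a b)
    simpa only [map_mul, map_sub, map_ofNat] using h
  have rc : ∀ a : K, ι (cPM q a a) = ι (polarMap q a 1) ^ 2 - 4 * ι (q a) := by
    intro a
    have h := congrArg ι (pm_caa q hmul hint hbil_left hbil_right a)
    simpa only [map_mul, map_sub, map_pow, map_ofNat] using h
  -- numerators
  set M : K → AlgebraicClosure L :=
    fun a => ι (polarMap q a 1) * ι (cPM q o o) + ι (cPM q a o) * s with hM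
  set M' : K → AlgebraicClosure L :=
    fun a => ι (polarMap q a 1) * ι (cPM q o o) - ι (cPM q a o) * s with hM'
  have k1 : ∀ a b : K, M a * M b = 2 * ι (cPM q o o) * M (a*b) := by
    intro a b
    simp only [hM]
    linear_combination (norm := ring_nf)
      (ι (cPM q a o) * ι (cPM q b o)) * hs + (ι (cPM q o o) * s) * (r2 a b)
      + (ι (cPM q o o))^2 * (r3 a b) + ι (cPM q o o) * (r1 a b)
  have k1' : ∀ a b : K, M' a * M' b = 2 * ι (cPM q o o) * M' (a*b) := by
    intro a b
    simp only [hM']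
    linear_combination (norm := ring_nf)
      (ι (cPM q a o) * ι (cPM q b o)) * hs - (ι (cPM q o o) * s) * (r2 a b)
      + (ι (cPM q o o))^2 * (r3 a b) + ι (cPM q o o) * (r1 a b)
  have hden : (2 : AlgebraicClosure L) * ι (cPM q o o) ≠ 0 := mul_ne_zero h2' hd'
  have hco : ∀ a b : K, ι (cPM q (a+b) o) = ι (cPM q a o) + ι (cPM q b o) := by
    intro a b
    rw [← map_add]
    exact congrArg ι (pm_cadd_left q hbil_left a b o)
  have hta : ∀ a b : K, ι (polarMap q (a+b) 1) = ι (polarMap q a 1) + ι (polarMap q b 1) := by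
    intro a b
    rw [← map_add]
    exact congrArg ι (pm_tadd q hbil_left a b)
  have ht1 : ι (polarMap q 1 1) = 2 := by rw [pm_t1 q hint, map_ofNat]
  have hc1 : ι (cPM q 1 o) = 0 := by rw [pm_c1 q hint hbil_left o, map_zero]
  -- the two ring homs
  have hone : M 1 / (2 * ι (cPM q o o)) = 1 := by
    simp only [hM]
    rw [ht1, hc1]
    field_simp
    ring
  have hone' : M' 1 / (2 * ι (cPM q o o)) = 1 := by
    simp only [hM']
    rw [ht1, hc1]
    field_simp
    ring
  have hmul1 : ∀ a b : K, M (a*b) / (2 * ι (cPM q o o))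
      = (M a / (2 * ι (cPM q o o))) * (M b / (2 * ι (cPM q o o))) := by
    intro a b
    rw [div_mul_div_comm, div_eq_div_iff hden (mul_ne_zero hden hden)]
    linear_combination (-(2 * ι (cPM q o o))) * k1 a b
  have hmul1' : ∀ a b : K, M' (a*b) / (2 * ι (cPM q o o))
      = (M' a / (2 * ι (cPM q o o))) * (M' b / (2 * ι (cPM q o o))) := by
    intro a b
    rw [div_mul_div_comm, div_eq_div_iff hden (mul_ne_zero hden hden)]
    linear_combination (-(2 * ι (cPM q o o))) * k1' a b
  have haddM : ∀ a b : K, M (a+b) / (2 * ι (cPM q o o))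
      = M a / (2 * ι (cPM q o o)) + M b / (2 * ι (cPM q o o)) := by
    intro a b
    simp only [hM]
    rw [hco, hta, ← add_div]
    ring_nf
  have haddM' : ∀ a b : K, M' (a+b) / (2 * ι (cPM q o o))
      = M' a / (2 * ι (cPM q o o)) + M' b / (2 * ι (cPM q o o)) := by
    intro a b
    simp only [hM']
    rw [hco, hta, ← add_div]
    ring_nf
  let φ₁ : K →+* AlgebraicClosure L := RingHom.mk'
    (MonoidHom.mk (OneHom.mk (fun a => M a / (2 * ι (cPM q o o))) hone) hmul1) haddM
  let φ₂ : K →+* AlgebraicClosure L := RingHom.mk'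
    (MonoidHom.mk (OneHom.mk (fun a => M' a / (2 * ι (cPM q o o))) hone') hmul1') haddM'
  refine ⟨φ₁, φ₂, fun a => ?_⟩
  show ι (q a) = (M a / (2 * ι (cPM q o o))) * (M' a / (2 * ι (cPM q o o)))
  rw [div_mul_div_comm, eq_div_iff (mul_ne_zero hden hden)]
  simp only [hM, hM']
  linear_combination (norm := ring_nf)
    (ι (cPM q a o)^2) * hs + ι (cPM q o o) * (r1 a a) + ι (cPM q o o)^2 * (rc a)

theorem pm_case2 (h2 : (2 : L) = 0) (o : K) (hto : polarMap q o 1 ≠ 0) :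
    ∃ φ₁ φ₂ : K →+* AlgebraicClosure L,
      ∀ a : K, algebraMap L (AlgebraicClosure L) (q a) = φ₁ a * φ₂ a := by
  set ι := algebraMap L (AlgebraicClosure L) with hι
  have h2' : (2 : AlgebraicClosure L) = 0 := by
    rw [← map_ofNat ι 2, show ((2:L) = 0) from h2, map_zero]
  have hto' : ι (polarMap q o 1) ≠ 0 := fun h => hto (by apply ι.injective; rw [h, map_zero])
  -- a root of X^2 - t(o) X + q(o)
  have hdeg : (Polynomial.X ^ 2 - Polynomial.C (ι (polarMap q o 1)) * Polynomial.X
      + Polynomial.C (ι (q o))).degree = 2 := by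
    compute_degree!
  obtain ⟨ρ, hρ0⟩ := IsAlgClosed.exists_root
    (Polynomial.X ^ 2 - Polynomial.C (ι (polarMap q o 1)) * Polynomial.X
      + Polynomial.C (ι (q o))) (by rw [hdeg]; norm_num)
  have hρ : ρ ^ 2 = ι (polarMap q o 1) * ρ - ι (q o) := by
    have h := hρ0
    simp only [Polynomial.IsRoot, Polynomial.eval_add, Polynomial.eval_sub,
      Polynomial.eval_pow, Polynomial.eval_mul, Polynomial.eval_C, Polynomial.eval_X] at h
    linear_combination h
  -- mapped identities
  have i1 : ∀ a b : K, ι (polarMap q a o) * ι (polarMap q b o)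
      = ι (polarMap q a 1) * ι (polarMap q b 1) * ι (q o)
        + ι (polarMap q o 1) * ι (polarMap q (a*b) o) := by
    intro a b
    have h := congrArg ι (pm_I0 q hmul hbil_left hbil_right h2 a b o)
    simpa only [map_mul, map_add] using h
  have i2 : ∀ a b : K, ι (polarMap q a o) * ι (polarMap q b 1)
      + ι (polarMap q b o) * ι (polarMap q a 1)
      + ι (polarMap q a 1) * ι (polarMap q b 1) * ι (polarMap q o 1)
      = ι (polarMap q o 1) * ι (polarMap q (a*b) 1) := by
    intro a b
    have h := congrArg ι (pm_II0 q hmul hbil_left hbil_right h2 a b o)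
    simpa only [map_mul, map_add] using h
  have i3 : ∀ a : K, ι (polarMap q a o) ^ 2
      + ι (polarMap q o 1) * ι (polarMap q a 1) * ι (polarMap q a o)
      = ι (polarMap q a 1) ^ 2 * ι (q o) + ι (polarMap q o 1) ^ 2 * ι (q a) := by
    intro a
    have h := congrArg ι (pm_P0 q hmul hbil_left hbil_right h2 a o)
    simpa only [map_mul, map_add, map_pow] using h
  -- numerators
  set N : K → AlgebraicClosure L :=
    fun a => ι (polarMap q a o) + ι (polarMap q a 1) * ρ with hN
  set N₂ : K → AlgebraicClosure L :=
    fun a => ι (polarMap q a o) + ι (polarMap q a 1) * ρ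
      + ι (polarMap q a 1) * ι (polarMap q o 1) with hN₂
  have k1 : ∀ a b : K, N a * N b = ι (polarMap q o 1) * N (a*b) := by
    intro a b
    simp only [hN]
    linear_combination (norm := ring_nf)
      i1 a b + ρ * i2 a b + (ι (polarMap q a 1) * ι (polarMap q b 1)) * hρ
  have k2 : ∀ a b : K, ι (polarMap q a 1) * N b + ι (polarMap q b 1) * N a
      + ι (polarMap q a 1) * ι (polarMap q b 1) * ι (polarMap q o 1)
      = ι (polarMap q o 1) * ι (polarMap q (a*b) 1) := by
    intro a b
    simp only [hN]
    linear_combination (norm := ring_nf)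
      i2 a b + (ι (polarMap q a 1) * ι (polarMap q b 1) * ρ) * h2'
  have k3 : ∀ a : K, N a * (N a + ι (polarMap q a 1) * ι (polarMap q o 1))
      = ι (polarMap q o 1) ^ 2 * ι (q a) := by
    intro a
    simp only [hN]
    linear_combination (norm := ring_nf)
      i3 a + (ι (polarMap q a 1)) ^ 2 * hρ
      + (ι (polarMap q a o) * ι (polarMap q a 1) * ρ
         + ι (polarMap q a 1) ^ 2 * ι (polarMap q o 1) * ρ) * h2'
  have ht1 : ι (polarMap q 1 1) = 2 := by rw [pm_t1 q hint, map_ofNat]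
  have hN1 : N 1 = ι (polarMap q o 1) := by
    simp only [hN]
    rw [pm_symm q 1 o, ht1, h2', zero_mul, add_zero]
  have hN₂1 : N₂ 1 = ι (polarMap q o 1) := by
    simp only [hN₂]
    rw [pm_symm q 1 o, ht1, h2', zero_mul, add_zero, zero_mul, add_zero]
  have hfo_add : ∀ a b : K, ι (polarMap q (a+b) o) = ι (polarMap q a o) + ι (polarMap q b o) := by
    intro a b; rw [← map_add]; exact congrArg ι (hbil_left a b o)
  have hta : ∀ a b : K, ι (polarMap q (a+b) 1) = ι (polarMap q a 1) + ι (polarMap q b 1) := by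
    intro a b; rw [← map_add]; exact congrArg ι (pm_tadd q hbil_left a b)
  have hone : N 1 / ι (polarMap q o 1) = 1 := by rw [hN1]; exact div_self hto'
  have hone₂ : N₂ 1 / ι (polarMap q o 1) = 1 := by rw [hN₂1]; exact div_self hto'
  have hmul1 : ∀ a b : K, N (a*b) / ι (polarMap q o 1)
      = (N a / ι (polarMap q o 1)) * (N b / ι (polarMap q o 1)) := by
    intro a b
    rw [div_mul_div_comm, div_eq_div_iff hto' (mul_ne_zero hto' hto')]
    linear_combination (-(ι (polarMap q o 1))) * k1 a b
  have hmul₂ : ∀ a b : K, N₂ (a*b) / ι (polarMap q o 1)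
      = (N₂ a / ι (polarMap q o 1)) * (N₂ b / ι (polarMap q o 1)) := by
    intro a b
    rw [div_mul_div_comm, div_eq_div_iff hto' (mul_ne_zero hto' hto')]
    have e : ∀ x : K, N₂ x = N x + ι (polarMap q x 1) * ι (polarMap q o 1) := by
      intro x; simp only [hN, hN₂]
    rw [e, e, e]
    linear_combination (norm := ring_nf)
      (-(ι (polarMap q o 1))) * k1 a b - (ι (polarMap q o 1))^2 * k2 a b
  have hadd1 : ∀ a b : K, N (a+b) / ι (polarMap q o 1)
      = N a / ι (polarMap q o 1) + N b / ι (polarMap q o 1) := by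
    intro a b
    simp only [hN]
    rw [hfo_add, hta, ← add_div]
    ring_nf
  have hadd₂ : ∀ a b : K, N₂ (a+b) / ι (polarMap q o 1)
      = N₂ a / ι (polarMap q o 1) + N₂ b / ι (polarMap q o 1) := by
    intro a b
    simp only [hN₂]
    rw [hfo_add, hta, ← add_div]
    ring_nf
  let φ₁ : K →+* AlgebraicClosure L := RingHom.mk'
    (MonoidHom.mk (OneHom.mk (fun a => N a / ι (polarMap q o 1)) hone) hmul1) hadd1
  let φ₂ : K →+* AlgebraicClosure L := RingHom.mk'
    (MonoidHom.mk (OneHom.mk (fun a => N₂ a / ι (polarMap q o 1)) hone₂) hmul₂) hadd₂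
  refine ⟨φ₁, φ₂, fun a => ?_⟩
  show ι (q a) = (N a / ι (polarMap q o 1)) * (N₂ a / ι (polarMap q o 1))
  rw [div_mul_div_comm, eq_div_iff (mul_ne_zero hto' hto')]
  have e : N₂ a = N a + ι (polarMap q a 1) * ι (polarMap q o 1) := by
    simp only [hN, hN₂]
  rw [e]
  linear_combination (norm := ring_nf) - k3 a

end Cases

theorem stmt_11 {K L : Type*} [Field K] [Field L] (q : K → L)
    (hmul : ∀ a b : K, q (a * b) = q a * q b)
    (hint : ∀ n : ℤ, q ((n : K)) = ((n ^ 2 : ℤ) : L))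
    (hbil_left : ∀ a b c : K, polarMap q (a + b) c = polarMap q a c + polarMap q b c)
    (hbil_right : ∀ a b c : K, polarMap q a (b + c) = polarMap q a b + polarMap q a c) :
    ∃ φ₁ φ₂ : K →+* AlgebraicClosure L,
      ∀ a : K, algebraMap L (AlgebraicClosure L) (q a) = φ₁ a * φ₂ a := by
  by_cases h2 : (2 : L) = 0
  · by_cases ht : ∀ a : K, polarMap q a 1 = 0
    · exact pm_case1 q hmul hint hbil_left hbil_right h2 ht
    · push_neg at ht
      obtain ⟨o, ho⟩ := ht
      exact pm_case2 q hmul hint hbil_left hbil_right h2 o ho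
  · by_cases hD : ∀ a : K, cPM q a a = 0
    · exact pm_case3 q hmul hint hbil_left hbil_right h2 hD
    · push_neg at hD
      obtain ⟨o, ho⟩ := hD
      exact pm_case4 q hmul hint hbil_left hbil_right h2 o ho
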